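/- Let G be a complete OBDD of width w over a finite variable set X (with respect to some linear order of X), and let Z ⊆ X. Then there exists a complete OBDD over X∖Z (with respect to the induced order) of width at most 2^w that computes the existential projection ∃Z G of the function computed by G. -/
import Mathlib


set_option autoImplicit false

/-- A complete OBDD over `n` variable layers: the `i`-th layer consists of the nodes
labeled with variable `var i` (for `i < n`), `size i` is the number of nodes in
layer `i`, and after the last layer the run reaches a sink `0`/`1` as given by
`accept`. -/
structure CompleteOBDD (V : Type) (n : ℕ) where
  var : ℕ → V
  var_inj : ∀ i j, i < n → j < n → var i = var j → i = j
  size : ℕ → ℕ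
  start : Fin (size 0)
  trans : (i : ℕ) → Fin (size i) → Bool → Fin (size (i + 1))
  accept : Fin (size n) → Bool

namespace CompleteOBDD

variable {V : Type} {n : ℕ}

/-- The node of layer `i` reached from the source under assignment `a`. -/
def runTo (B : CompleteOBDD V n) (a : V → Bool) : (i : ℕ) → Fin (B.size i)
  | 0 => B.start
  | i + 1 => B.trans i (B.runTo a i) (a (B.var i))

/-- The Boolean value computed by the OBDD on assignment `a`. -/
def eval (B : CompleteOBDD V n) (a : V → Bool) : Bool := B.accept (B.runTo a n)

/-- The set of variables read by the OBDD. -/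
def vars [DecidableEq V] (B : CompleteOBDD V n) : Finset V := (Finset.range n).image B.var

/-- The width of a complete OBDD: the maximal size of a variable layer. -/
def width (B : CompleteOBDD V n) : ℕ := (Finset.range n).sup B.size

end CompleteOBDD

set_option linter.unusedSectionVars false
namespace ObddProj

noncomputable def sEquiv (N : ℕ) : Finset (Fin N) ≃ Fin (2 ^ N) :=
  Fintype.equivFinOfCardEq (by simp [Fintype.card_finset])

variable {V : Type} [DecidableEq V] {n : ℕ} (G : CompleteOBDD V n) (Z : Finset V)

def both (p : ℕ) (S : Finset (Fin (G.size p))) : Finset (Fin (G.size (p + 1))) :=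
  S.image (fun u => G.trans p u true) ∪ S.image (fun u => G.trans p u false)

def F (a : V → Bool) : (p : ℕ) → Finset (Fin (G.size p))
  | 0 => {G.start}
  | p + 1 =>
      if G.var p ∈ Z then both G p (F a p)
      else (F a p).image (fun u => G.trans p u (a (G.var p)))

def castS {p q : ℕ} (h : p = q) (S : Finset (Fin (G.size p))) : Finset (Fin (G.size q)) :=
  h ▸ S

lemma castS_F (a : V → Bool) {p q : ℕ} (h : p = q) :
    castS G h (F G Z a p) = F G Z a q := by subst h; rfl

def iterB (p : ℕ) (S : Finset (Fin (G.size p))) : (q : ℕ) → Finset (Fin (G.size q))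
  | 0 => if h : p = 0 then castS G h S else ∅
  | q + 1 => if h : p = q + 1 then castS G h S else both G q (iterB p S q)

lemma runTo_congr (σ τ : V → Bool) (p : ℕ)
    (h : ∀ j, j < p → σ (G.var j) = τ (G.var j)) : G.runTo σ p = G.runTo τ p := by
  induction p with
  | zero => rfl
  | succ p ih =>
      simp only [CompleteOBDD.runTo]
      rw [ih (fun j hj => h j (Nat.lt_succ_of_lt hj)), h p (Nat.lt_succ_self p)]

lemma mem_both {p : ℕ} (S : Finset (Fin (G.size p))) (v : Fin (G.size (p + 1))) :
    v ∈ both G p S ↔ ∃ u ∈ S, ∃ b, G.trans p u b = v := by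
  simp only [both, Finset.mem_union, Finset.mem_image]
  constructor
  · rintro (⟨u, hu, rfl⟩ | ⟨u, hu, rfl⟩)
    · exact ⟨u, hu, true, rfl⟩
    · exact ⟨u, hu, false, rfl⟩
  · rintro ⟨u, hu, b, rfl⟩
    cases b
    · exact Or.inr ⟨u, hu, rfl⟩
    · exact Or.inl ⟨u, hu, rfl⟩

lemma memF_iff (a : V → Bool) (p : ℕ) (hp : p ≤ n) (v : Fin (G.size p)) :
    v ∈ F G Z a p ↔ ∃ σ : V → Bool, (∀ x, x ∉ Z → σ x = a x) ∧ G.runTo σ p = v := by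
  induction p with
  | zero =>
      simp only [F, Finset.mem_singleton]
      constructor
      · rintro rfl; exact ⟨a, fun x _ => rfl, rfl⟩
      · rintro ⟨σ, -, rfl⟩; rfl
  | succ p ih =>
      have hpn : p < n := hp
      have ihp := ih (le_of_lt hp)
      by_cases hzp : G.var p ∈ Z
      · rw [show F G Z a (p+1) = both G p (F G Z a p) from if_pos hzp]
        rw [mem_both]
        constructor
        · rintro ⟨u, hu, b, rfl⟩
          obtain ⟨σ, hσ, hrun⟩ := (ihp u).mp hu
          refine ⟨Function.update σ (G.var p) b, ?_, ?_⟩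
          · intro x hx
            rw [Function.update_of_ne (fun hxe => hx (by rw [hxe]; exact hzp)), hσ x hx]
          · simp only [CompleteOBDD.runTo]
            have hrr : G.runTo (Function.update σ (G.var p) b) p = G.runTo σ p := by
              apply runTo_congr
              intro j hj
              apply Function.update_of_ne
              intro hje
              exact absurd (G.var_inj j p (lt_trans hj hpn) hpn hje) (Nat.ne_of_lt hj)
            rw [hrr, hrun, Function.update_self]
        · rintro ⟨σ, hσ, rfl⟩
          exact ⟨G.runTo σ p, (ihp _).mpr ⟨σ, hσ, rfl⟩, σ (G.var p), rfl⟩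
      · rw [show F G Z a (p+1) = (F G Z a p).image (fun u => G.trans p u (a (G.var p)))
            from if_neg hzp]
        rw [Finset.mem_image]
        constructor
        · rintro ⟨u, hu, rfl⟩
          obtain ⟨σ, hσ, hrun⟩ := (ihp u).mp hu
          refine ⟨σ, hσ, ?_⟩
          simp only [CompleteOBDD.runTo]
          rw [hrun, hσ _ hzp]
        · rintro ⟨σ, hσ, rfl⟩
          refine ⟨G.runTo σ p, (ihp _).mpr ⟨σ, hσ, rfl⟩, ?_⟩
          simp only [CompleteOBDD.runTo]
          rw [hσ _ hzp]

lemma iterB_F (a : V → Bool) (p q : ℕ) (hpq : p ≤ q)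
    (hz : ∀ j, p ≤ j → j < q → G.var j ∈ Z) :
    iterB G p (F G Z a p) q = F G Z a q := by
  induction q with
  | zero =>
      have hp0 : p = 0 := Nat.le_zero.mp hpq
      rw [iterB, dif_pos hp0, castS_F]
  | succ q ih =>
      by_cases h : p = q + 1
      · rw [iterB, dif_pos h, castS_F]
      · have hpq' : p ≤ q := Nat.lt_succ_iff.mp (lt_of_le_of_ne hpq h)
        rw [iterB, dif_neg h, ih hpq' (fun j h1 h2 => hz j h1 (Nat.lt_succ_of_lt h2))]
        rw [show F G Z a (q+1) = both G q (F G Z a q)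
            from if_pos (hz q hpq' (Nat.lt_succ_self q))]

lemma exists_accept_cast (a : V → Bool) {p : ℕ} (hp : p = n) (h2 : G.size p = G.size n) :
    (∃ v ∈ F G Z a p, G.accept (Fin.cast h2 v) = true) ↔
      ∃ v ∈ F G Z a n, G.accept v = true := by
  subst hp
  simp only [show ∀ v : Fin (G.size p), Fin.cast h2 v = v from fun v => Fin.ext rfl]

end ObddProj

/-- Let `G` be a complete OBDD of width `w` over a finite variable
set `X` (w.r.t. some linear order of `X`) and let `Z ⊆ X`. Then there is a complete
OBDD over `X \ Z`, with respect to the induced order (the new variable order is a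
strictly monotone subsequence of the old one enumerating exactly `X \ Z`), of width
at most `2 ^ w` that computes the existential projection `∃Z G`. -/
theorem complete_obdd_exists_projection {V : Type} [DecidableEq V] (n : ℕ)
    (G : CompleteOBDD V n) (w : ℕ) (hw : G.width ≤ w) (Z : Finset V) (hZ : Z ⊆ G.vars) :
    ∃ (m : ℕ) (B : CompleteOBDD V m) (e : ℕ → ℕ),
      (∀ i, i < m → e i < n) ∧
      (∀ i j, i < j → j < m → e i < e j) ∧
      (∀ i, i < m → B.var i = G.var (e i)) ∧
      B.vars = G.vars \ Z ∧
      B.width ≤ 2 ^ w ∧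
      (∀ a : V → Bool,
        B.eval a = true ↔ ∃ σ : V → Bool, (∀ x, x ∉ Z → σ x = a x) ∧ G.eval σ = true) := by
  classical
  open ObddProj in
  set idx : Finset ℕ := (Finset.range n).filter (fun j => G.var j ∉ Z) with hidx
  set m : ℕ := idx.card with hm
  set E : ℕ → ℕ := fun k => if h : k < m then idx.orderEmbOfFin rfl ⟨k, h⟩ else n with hE
  have hEpos : ∀ k (h : k < m), E k = idx.orderEmbOfFin rfl ⟨k, h⟩ := by
    intro k h; simp only [hE, dif_pos h]
  have hEmem : ∀ k, k < m → E k ∈ idx := by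
    intro k h; rw [hEpos k h]; exact Finset.orderEmbOfFin_mem idx rfl ⟨k, h⟩
  have hElt : ∀ k, k < m → E k < n := by
    intro k h
    have := hEmem k h
    rw [hidx, Finset.mem_filter, Finset.mem_range] at this
    exact this.1
  have hEnotZ : ∀ k, k < m → G.var (E k) ∉ Z := by
    intro k h
    have := hEmem k h
    rw [hidx, Finset.mem_filter] at this
    exact this.2
  have hEle : ∀ k, E k ≤ n := by
    intro k
    by_cases h : k < m
    · exact le_of_lt (hElt k h)
    · simp only [hE, dif_neg h]; exact le_rfl
  have hEn : ∀ k, m ≤ k → E k = n := by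
    intro k h; simp only [hE, dif_neg (Nat.not_lt.mpr h)]
  have hmono : ∀ i j, i < j → j < m → E i < E j := by
    intro i j hij hj
    rw [hEpos i (lt_trans hij hj), hEpos j hj]
    exact (idx.orderEmbOfFin rfl).strictMono (show (⟨i, _⟩ : Fin m) < ⟨j, hj⟩ from hij)
  have hsurj : ∀ j ∈ idx, ∃ k, ∃ h : k < m, E k = j := by
    intro j hj
    have : j ∈ Set.range (idx.orderEmbOfFin rfl) := by
      rw [Finset.range_orderEmbOfFin]; exact hj
    obtain ⟨⟨k, hk⟩, hkj⟩ := this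
    exact ⟨k, hk, by rw [hEpos k hk]; exact hkj⟩
  -- gap lemmas
  have hgap0 : ∀ j, j < E 0 → G.var j ∈ Z := by
    intro j hj
    by_contra hjz
    have hjn : j < n := lt_of_lt_of_le hj (hEle 0)
    have hjidx : j ∈ idx := by rw [hidx, Finset.mem_filter, Finset.mem_range]; exact ⟨hjn, hjz⟩
    obtain ⟨k, hk, rfl⟩ := hsurj j hjidx
    have h0 : (0:ℕ) < m := Nat.pos_of_ne_zero (fun h => by omega)
    rcases Nat.eq_zero_or_pos k with rfl | hkpos
    · omega
    · exact absurd (hmono 0 k hkpos hk) (by omega)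
  have hgap : ∀ k, k < m → ∀ j, E k < j → j < E (k + 1) → G.var j ∈ Z := by
    intro k hk j h1 h2
    by_contra hjz
    have hjn : j < n := lt_of_lt_of_le h2 (hEle (k + 1))
    have hjidx : j ∈ idx := by rw [hidx, Finset.mem_filter, Finset.mem_range]; exact ⟨hjn, hjz⟩
    obtain ⟨k', hk', hkj⟩ := hsurj j hjidx
    have hkk' : k < k' := by
      by_contra hle
      have : E k' ≤ E k := by
        rcases Nat.lt_or_ge k' k with h | h
        · exact le_of_lt (hmono k' k h hk)
        · have : k' = k := by omega
          subst this; exact le_rfl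
      omega
    have hk1 : k + 1 < m ∨ k + 1 = m := by omega
    rcases hk1 with h | h
    · have : E (k + 1) ≤ E k' := by
        rcases Nat.lt_or_ge (k+1) k' with hlt | hge
        · exact le_of_lt (hmono (k+1) k' hlt hk')
        · have : k + 1 = k' := by omega
          subst this; exact le_rfl
      omega
    · omega
  have hEm : E m = n := hEn m le_rfl
  have hsz : G.size (E m) = G.size n := congrArg G.size hEm
  have hE01 : ∀ k, k < m → E k + 1 ≤ E (k + 1) := by
    intro k hk
    by_cases h : k + 1 < m
    · exact hmono k (k+1) (Nat.lt_succ_self k) h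
    · rw [hEn (k+1) (by omega)]; exact hElt k hk
  refine ⟨m, {
      var := fun k => G.var (E k)
      var_inj := by
        intro i j hi hj hij
        have := G.var_inj (E i) (E j) (hElt i hi) (hElt j hj) hij
        by_contra hne
        rcases Nat.lt_or_ge i j with h | h
        · exact absurd (hmono i j h hj) (by omega)
        · have : j < i := by omega
          exact absurd (hmono j i this hi) (by omega)
      size := fun k => 2 ^ G.size (E k)
      start := sEquiv _ (iterB G 0 {G.start} (E 0))
      trans := fun k s b =>
        if h : k < m then
          sEquiv _ (iterB G (E k + 1)
            (((sEquiv _).symm s).image (fun u => G.trans (E k) u b)) (E (k + 1)))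
        else
          sEquiv _ (iterB G (E k) ((sEquiv _).symm s) (E (k + 1)))
      accept := fun s =>
        decide (∃ v ∈ (sEquiv _).symm s, G.accept (Fin.cast hsz v) = true)
    }, E, hElt, hmono, fun i _ => rfl, ?_, ?_, ?_⟩
  · -- vars
    ext x
    simp only [CompleteOBDD.vars, Finset.mem_image, Finset.mem_sdiff, Finset.mem_range]
    constructor
    · rintro ⟨i, hi, rfl⟩
      exact ⟨⟨E i, hElt i hi, rfl⟩, hEnotZ i hi⟩
    · rintro ⟨⟨j, hj, rfl⟩, hxz⟩
      have hjidx : j ∈ idx := by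
        rw [hidx, Finset.mem_filter, Finset.mem_range]
        exact ⟨hj, hxz⟩
      obtain ⟨k, hk, hkj⟩ := hsurj j hjidx
      exact ⟨k, hk, by rw [hkj]⟩
  · -- width
    apply Finset.sup_le
    intro k hk
    rw [Finset.mem_range] at hk
    apply Nat.pow_le_pow_right (by norm_num)
    calc G.size (E k) ≤ G.width :=
          Finset.le_sup (Finset.mem_range.mpr (hElt k hk))
      _ ≤ w := hw
  · -- eval
    intro a
    set B : CompleteOBDD V m := {
      var := fun k => G.var (E k)
      var_inj := by
        intro i j hi hj hij
        have := G.var_inj (E i) (E j) (hElt i hi) (hElt j hj) hij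
        by_contra hne
        rcases Nat.lt_or_ge i j with h | h
        · exact absurd (hmono i j h hj) (by omega)
        · have : j < i := by omega
          exact absurd (hmono j i this hi) (by omega)
      size := fun k => 2 ^ G.size (E k)
      start := sEquiv _ (iterB G 0 {G.start} (E 0))
      trans := fun k s b =>
        if h : k < m then
          sEquiv _ (iterB G (E k + 1)
            (((sEquiv _).symm s).image (fun u => G.trans (E k) u b)) (E (k + 1)))
        else
          sEquiv _ (iterB G (E k) ((sEquiv _).symm s) (E (k + 1)))
      accept := fun s =>
        decide (∃ v ∈ (sEquiv _).symm s, G.accept (Fin.cast hsz v) = true) } with hB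
    show B.eval a = true ↔ _
    have runB : ∀ k, k ≤ m → (sEquiv _).symm (B.runTo a k) = F G Z a (E k) := by
      intro k hk
      induction k with
      | zero =>
          show (sEquiv _).symm (B.start) = _
          exact (Equiv.symm_apply_apply (sEquiv _) (iterB G 0 {G.start} (E 0))).trans
            (iterB_F G Z a 0 (E 0) (Nat.zero_le _) (fun j _ hj => hgap0 j hj))
      | succ k ih =>
          have hkm : k < m := hk
          have ihk := ih (le_of_lt hk)
          show (sEquiv _).symm (B.trans k (B.runTo a k) (a (B.var k))) = _
          have htr : B.trans k (B.runTo a k) (a (B.var k)) =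
              sEquiv _ (iterB G (E k + 1)
                (((sEquiv _).symm (B.runTo a k)).image
                  (fun u => G.trans (E k) u (a (G.var (E k))))) (E (k + 1))) :=
            dif_pos hkm
          rw [htr, Equiv.symm_apply_apply, ihk]
          have himg : (F G Z a (E k)).image (fun u => G.trans (E k) u (a (G.var (E k))))
              = F G Z a (E k + 1) :=
            (if_neg (hEnotZ k hkm)).symm
          rw [himg]
          exact iterB_F G Z a (E k + 1) (E (k + 1)) (hE01 k hkm)
            (fun j h1 h2 => hgap k hkm j (Nat.lt_of_succ_le h1) h2)
    have hrun := runB m le_rfl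
    show (B.accept (B.runTo a m) = true) ↔ _
    have hacc : B.accept (B.runTo a m) =
        decide (∃ v ∈ (sEquiv _).symm (B.runTo a m), G.accept (Fin.cast hsz v) = true) := rfl
    rw [hacc, decide_eq_true_iff, hrun, exists_accept_cast G Z a hEm hsz]
    constructor
    · rintro ⟨v, hv, hacc⟩
      obtain ⟨σ, hσ, hrunv⟩ := (memF_iff G Z a n le_rfl v).mp hv
      exact ⟨σ, hσ, by rw [CompleteOBDD.eval, hrunv]; exact hacc⟩
    · rintro ⟨σ, hσ, hev⟩
      exact ⟨G.runTo σ n, (memF_iff G Z a n le_rfl _).mpr ⟨σ, hσ, rfl⟩, hev⟩
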